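/- Suppose a group G acts faithfully and uniformly equicontinuously on a Hausdorff uniform space X and the action has small scale bounded orbits. Let B be a basis of G-invariant entourages of X; for each E ∈ B the subgroup G_E is normal in G, and for F ⊆ E in B there is a homomorphism ψ_{FE} : G/G_F → G/G_E sending gG_F to gG_E, giving an inverse system of groups {G/G_E}_{E∈B} (indexed by B ordered by reverse inclusion). Then the homomorphism G → lim_{E∈B} G/G_E sending g to the thread (gG_E)_{E∈B} is injective, so G is isomorphic to a subgroup of lim G/G_E; if moreover the orbit map p : X → X/G has complete fibers, this homomorphism is an isomorphism. -/

import Mathlib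

open Filter Set

universe u v

section Actions

variable (G : Type*) (X : Type*)

/-- The action of `G` on the uniform space `X` is neutral. -/
def IsNeutralAction [SMul G X] [UniformSpace X] : Prop :=
  ∀ E ∈ uniformity X, ∃ F ∈ uniformity X,
    ∀ (x y : X) (g : G), (x, g • y) ∈ F → ∃ h : G, (h • x, y) ∈ E

/-- `G_E`: the subgroup of `G` generated by the elements that move some point
of `X` within the entourage `E`. -/
def subgroupEnt [Group G] [MulAction G X] (E : Set (X × X)) : Subgroup G :=
  Subgroup.closure { g : G | ∃ x : X, (x, g • x) ∈ E }

/-- The action has small scale bounded orbits. -/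
def SmallScaleBoundedOrbits [Group G] [MulAction G X] [UniformSpace X] : Prop :=
  ∀ E ∈ uniformity X, ∃ F ∈ uniformity X,
    ∀ g ∈ subgroupEnt G X F, ∀ x : X, (x, g • x) ∈ E

/-- The action is uniformly properly discontinuous. -/
def UnifProperlyDisc [Group G] [SMul G X] [UniformSpace X] : Prop :=
  ∃ E₀ ∈ uniformity X, ∀ (g : G) (x : X), (x, g • x) ∈ E₀ → g = 1

/-- The action is faithful. -/
def FaithfulAction [Group G] [SMul G X] : Prop :=
  ∀ g : G, (∀ x : X, g • x = x) → g = 1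

/-- The action is uniformly equicontinuous. -/
def UnifEquicont [SMul G X] [UniformSpace X] : Prop :=
  ∀ E ∈ uniformity X, ∃ F ∈ uniformity X,
    ∀ (g : G) (x y : X), (x, y) ∈ F → (g • x, g • y) ∈ E

/-- The entourage `E` is `G`-invariant. -/
def InvariantEnt [SMul G X] (E : Set (X × X)) : Prop :=
  ∀ (g : G) (x y : X), (x, y) ∈ E → (g • x, g • y) ∈ E

end Actions


theorem subgroupEnt_mono {G : Type u} [Group G] {X : Type v} [MulAction G X]
    {E F : Set (X × X)} (h : E ⊆ F) : subgroupEnt G X E ≤ subgroupEnt G X F :=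
  Subgroup.closure_mono (fun g hg => hg.imp fun z hz => h hz)

theorem mem_subgroupEnt {G : Type u} [Group G] {X : Type v} [MulAction G X]
    {E : Set (X × X)} {g : G} {x : X} (h : (x, g • x) ∈ E) : g ∈ subgroupEnt G X E :=
  Subgroup.subset_closure ⟨x, h⟩

/-- Suppose `G` acts faithfully and uniformly equicontinuously on a Hausdorff
uniform space `X` with small scale bounded orbits, and `B` is a basis of
`G`-invariant entourages of `X` (so that each `G_E`, `E ∈ B`, is normal in
`G`).  Then the natural homomorphism `G → lim_{E ∈ B} G/G_E`,
`g ↦ (g G_E)_{E ∈ B}`, is injective, so `G` is isomorphic to a subgroup of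
`lim G/G_E`; and if the orbit map `X → X/G` has complete fibers (every orbit is
complete) it is an isomorphism, i.e. it maps onto the set of threads. -/
theorem toLimQuotients_injective_and_surjective
    {G : Type u} [Group G] {X : Type v} [UniformSpace X] [MulAction G X]
    [T2Space X]
    (hfaith : FaithfulAction G X) (hue : UnifEquicont G X)
    (hssbo : SmallScaleBoundedOrbits G X)
    (B : Set (Set (X × X)))
    (hBent : ∀ E ∈ B, E ∈ uniformity X)
    (hBbasis : ∀ S ∈ uniformity X, ∃ E ∈ B, E ⊆ S)
    (hBinv : ∀ E ∈ B, InvariantEnt G X E)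
    (hBnormal : ∀ E ∈ B, (subgroupEnt G X E).Normal) :
    Function.Injective (fun g : G => fun i : B =>
      (QuotientGroup.mk g : G ⧸ subgroupEnt G X i.1)) ∧
    ((∀ x : X, IsComplete (MulAction.orbit G x)) →
      ∀ t : ∀ i : B, G ⧸ subgroupEnt G X i.1,
        (∀ (i j : B) (_ : i.1 ⊆ j.1) (g : G),
          t i = QuotientGroup.mk g → t j = QuotientGroup.mk g) →
        ∃ g : G, ∀ i : B, t i = QuotientGroup.mk g) := by
  have key : ∀ g : G, (∀ i : B, g ∈ subgroupEnt G X i.1) → g = 1 := by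
    intro g hg
    refine hfaith g fun x => ?_
    refine (eq_of_uniformity fun {V} hV => ?_).symm
    obtain ⟨F, hF, hFs⟩ := hssbo V hV
    obtain ⟨E, hEB, hEF⟩ := hBbasis F hF
    exact hFs g (subgroupEnt_mono hEF (hg ⟨E, hEB⟩)) x
  constructor
  · intro g₁ g₂ h
    have hmem : ∀ i : B, g₁⁻¹ * g₂ ∈ subgroupEnt G X i.1 := by
      intro i
      exact QuotientGroup.eq.mp (congrFun h i)
    exact inv_mul_eq_one.mp (key _ hmem)
  · intro hcomp t ht
    rcases isEmpty_or_nonempty X with hX | ⟨⟨x⟩⟩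
    · refine ⟨1, fun i => ?_⟩
      have hsub : ∀ g : G, g = 1 := fun g => hfaith g (fun z => (hX.false z).elim)
      rw [← QuotientGroup.out_eq' (t i), hsub (t i).out]
    · -- setup
      obtain ⟨E₀', hE₀', _⟩ := hBbasis Set.univ univ_mem
      haveI : Nonempty B := ⟨⟨E₀', hE₀'⟩⟩
      have hdir : ∀ i j : B, ∃ k : B, k.1 ⊆ i.1 ∧ k.1 ⊆ j.1 := by
        intro i j
        obtain ⟨k, hkB, hk⟩ := hBbasis (i.1 ∩ j.1)
          (inter_mem (hBent _ i.2) (hBent _ j.2))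
        exact ⟨⟨k, hkB⟩, fun p hp => (hk hp).1, fun p hp => (hk hp).2⟩
      set a : B → G := fun i => (t i).out with ha
      have hta : ∀ i, t i = QuotientGroup.mk (a i) := fun i =>
        (QuotientGroup.out_eq' (t i)).symm
      have htaij : ∀ i j : B, j.1 ⊆ i.1 → t i = QuotientGroup.mk (a j) :=
        fun i j hji => ht j i hji (a j) (hta j)
      set s : B → Set X := fun i => {z | ∃ j : B, j.1 ⊆ i.1 ∧ z = a j • x} with hsdef
      have hs_ne : ∀ i, (s i).Nonempty := fun i => ⟨a i • x, i, subset_rfl, rfl⟩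
      have hs_mono : ∀ i j : B, i.1 ⊆ j.1 → s i ⊆ s j := by
        rintro i j hij z ⟨k, hk, rfl⟩
        exact ⟨k, hk.trans hij, rfl⟩
      set f : Filter X := ⨅ i : B, Filter.principal (s i) with hfdef
      have hdirf : Directed (· ≥ ·) (fun i : B => Filter.principal (s i)) := by
        intro i j
        obtain ⟨k, hk1, hk2⟩ := hdir i j
        exact ⟨k, Filter.principal_mono.2 (hs_mono k i hk1),
          Filter.principal_mono.2 (hs_mono k j hk2)⟩
      have hmemf : ∀ {W : Set X}, W ∈ f ↔ ∃ i : B, s i ⊆ W := by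
        intro W
        rw [hfdef, Filter.mem_iInf_of_directed hdirf]
        simp only [Filter.mem_principal]
      have hsmall : ∀ U ∈ uniformity X, ∃ k : B,
          ∀ p ∈ s k, ∀ q ∈ s k, (p, q) ∈ U := by
        intro U hU
        obtain ⟨E₀, hE₀B, hE₀U⟩ := hBbasis U hU
        obtain ⟨F₀, hF₀, hF₀s⟩ := hssbo E₀ (hBent E₀ hE₀B)
        obtain ⟨k', hk'B, hk'F⟩ := hBbasis F₀ hF₀
        refine ⟨⟨k', hk'B⟩, ?_⟩
        rintro p ⟨j, hj, rfl⟩ q ⟨j', hj', rfl⟩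
        have h1 : QuotientGroup.mk (a j) =
            (QuotientGroup.mk (a j') : G ⧸ subgroupEnt G X k') :=
          (htaij ⟨k', hk'B⟩ j hj).symm.trans (htaij ⟨k', hk'B⟩ j' hj')
        have h2 : (a j)⁻¹ * a j' ∈ subgroupEnt G X F₀ :=
          subgroupEnt_mono hk'F (QuotientGroup.eq.mp h1)
        have h3 : (x, ((a j)⁻¹ * a j') • x) ∈ E₀ := hF₀s _ h2 x
        have h4 := hBinv E₀ hE₀B (a j) _ _ h3
        rw [smul_smul, mul_inv_cancel_left] at h4
        exact hE₀U h4
      have hne : Filter.NeBot f :=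
        Filter.iInf_neBot_of_directed' hdirf
          (fun i => Filter.principal_neBot_iff.2 (hs_ne i))
      have hcauchy : Cauchy f := by
        refine ⟨hne, fun U hU => ?_⟩
        obtain ⟨k, hk⟩ := hsmall U hU
        exact Filter.mem_prod_iff.mpr ⟨s k, hmemf.2 ⟨k, subset_rfl⟩, s k,
          hmemf.2 ⟨k, subset_rfl⟩, Set.prod_subset_iff.2 hk⟩
      have hle : f ≤ Filter.principal (MulAction.orbit G x) := by
        refine Filter.le_principal_iff.2 (hmemf.2 ⟨Classical.arbitrary B, ?_⟩)
        rintro z ⟨j, _, rfl⟩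
        exact MulAction.mem_orbit x (a j)
      obtain ⟨y, hyo, hfy⟩ := hcomp x f hcauchy hle
      obtain ⟨g, rfl⟩ : ∃ g : G, g • x = y := hyo
      refine ⟨g, fun i => ?_⟩
      obtain ⟨E₁, hE₁B, hE₁i⟩ := hBbasis i.1 (hBent _ i.2)
      have hD : SetRel.symmetrize E₁ ∈ uniformity X :=
        symmetrize_mem_uniformity (hBent _ hE₁B)
      have hball : UniformSpace.ball (g • x) (SetRel.symmetrize E₁) ∈ f :=
        hfy (UniformSpace.ball_mem_nhds _ hD)
      obtain ⟨k₀, hk₀⟩ := hmemf.1 hball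
      obtain ⟨k, hk1, hk2⟩ := hdir k₀ i
      have hkx : a k • x ∈ UniformSpace.ball (g • x) (SetRel.symmetrize E₁) :=
        hk₀ ⟨k, hk1, rfl⟩
      have h5 : (a k • x, g • x) ∈ E₁ :=
        SetRel.symmetrize_subset_self (SetRel.symm _ hkx)
      have h6 : (x, ((a k)⁻¹ * g) • x) ∈ E₁ := by
        have := hBinv E₁ hE₁B (a k)⁻¹ _ _ h5
        simpa [smul_smul] using this
      have h7 : (a k)⁻¹ * g ∈ subgroupEnt G X i.1 := mem_subgroupEnt (hE₁i h6)
      calc t i = QuotientGroup.mk (a k) := htaij i k hk2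
        _ = QuotientGroup.mk g := QuotientGroup.eq.mpr h7
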